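/- arXiv:1701.03494 — 14 statements merged into one kernel-verified Lean document; each statement's English description precedes it below -/
import Mathlib

section
/- Let D be a distributive lattice with zero, let S be a join-semilattice with zero, and let ∖ be an S-valued difference operation on D. Then for all a₁, b₁, a₂, b₂ ∈ D, if a₁ ≤ b₁ ∨ a₂ and a₁ ∧ b₂ ≤ b₁, then a₁ ∖ b₁ ≤ a₂ ∖ b₂ in S. -/
/-- Lemma (a₁ ∖ b₁ ≤ a₂ ∖ b₂) for an S-valued difference operation
on a distributive lattice D with zero. -/
theorem stmt0 {D S : Type*} [DistribLattice D] [OrderBot D]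
    [SemilatticeSup S] [OrderBot S]
    (d : D → D → S)
    (hD0 : ∀ x : D, d x x = ⊥)
    (hD1 : ∀ x y z : D, z ≤ y → y ≤ x → d x z = d x y ⊔ d y z)
    (hD2 : ∀ x y : D, d x y = d (x ⊔ y) y ∧ d x y = d x (x ⊓ y))
    (a₁ b₁ a₂ b₂ : D)
    (h1 : a₁ ≤ b₁ ⊔ a₂) (h2 : a₁ ⊓ b₂ ≤ b₁) :
    d a₁ b₁ ≤ d a₂ b₂ := by
  set c := a₁ ⊓ a₂ with hc
  have hA : (a₁ ⊓ b₁) ⊔ c = a₁ := by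
    rw [hc, ← inf_sup_left, inf_eq_left.mpr h1]
  have hcb : c ⊓ b₂ ≤ c ⊓ b₁ := by
    refine le_inf inf_le_left ?_
    calc c ⊓ b₂ ≤ a₁ ⊓ b₂ := inf_le_inf_right _ inf_le_left
    _ ≤ b₁ := h2
  have e1 : d a₁ b₁ = d c (c ⊓ b₁) := by
    calc d a₁ b₁ = d a₁ (a₁ ⊓ b₁) := (hD2 a₁ b₁).2
    _ = d ((a₁ ⊓ b₁) ⊔ c) (a₁ ⊓ b₁) := by rw [hA]
    _ = d (c ⊔ (a₁ ⊓ b₁)) (a₁ ⊓ b₁) := by rw [sup_comm]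
    _ = d c (a₁ ⊓ b₁) := ((hD2 c (a₁ ⊓ b₁)).1).symm
    _ = d c (c ⊓ (a₁ ⊓ b₁)) := (hD2 c (a₁ ⊓ b₁)).2
    _ = d c (c ⊓ b₁) := by
        congr 1
        have : c ≤ a₁ := inf_le_left
        rw [inf_comm a₁ b₁, ← inf_assoc, inf_eq_left.mpr (le_trans inf_le_left this)]
  have e2 : d c (c ⊓ b₁) ≤ d c (c ⊓ b₂) := by
    rw [hD1 c (c ⊓ b₁) (c ⊓ b₂) hcb inf_le_left]
    exact le_sup_left
  have e3 : d c (c ⊓ b₂) = d (c ⊔ b₂) b₂ := by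
    rw [← (hD2 c b₂).2, (hD2 c b₂).1]
  have e4 : d (c ⊔ b₂) b₂ ≤ d (a₂ ⊔ b₂) b₂ := by
    rw [hD1 (a₂ ⊔ b₂) (c ⊔ b₂) b₂ le_sup_right
      (sup_le_sup_right inf_le_right _)]
    exact le_sup_right
  calc d a₁ b₁ = d c (c ⊓ b₁) := e1
  _ ≤ d c (c ⊓ b₂) := e2
  _ = d (c ⊔ b₂) b₂ := e3
  _ ≤ d (a₂ ⊔ b₂) b₂ := e4
  _ = d a₂ b₂ := ((hD2 a₂ b₂).1).symm
end

section
/- Let L be a finite lattice, S a join-semilattice with zero, and ∖ an S-valued difference operation on L. Then for all a, b ∈ L, a ∖ b = ⋁ { p ∖ p⁎ : p join-irreducible in L, p ≤ a, p ≰ b }, where p⁎ denotes the unique lower cover of the join-irreducible element p. -/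
open Classical

/-- In a finite lattice, if `¬ a ≤ c` then there is a sup-irreducible `p ≤ a` with `¬ p ≤ c`. -/
lemma exists_supIrred_le_not_le {L : Type*} [Lattice L] [Fintype L] {a c : L}
    (h : ¬ a ≤ c) : ∃ p : L, SupIrred p ∧ p ≤ a ∧ ¬ p ≤ c := by
  induction a using WellFoundedLT.induction with
  | _ a IH =>
  by_cases ha : SupIrred a
  · exact ⟨a, ha, le_rfl, h⟩
  rw [not_supIrred] at ha
  obtain ha | ⟨x, y, rfl, hx, hy⟩ := ha
  · exact absurd ((ha inf_le_left).trans inf_le_right) h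
  by_cases hxc : x ≤ c
  · have hyc : ¬ y ≤ c := fun h' => h (sup_le hxc h')
    obtain ⟨p, h1, h2, h3⟩ := IH y hy hyc
    exact ⟨p, h1, h2.trans le_sup_right, h3⟩
  · obtain ⟨p, h1, h2, h3⟩ := IH x hx hxc
    exact ⟨p, h1, h2.trans le_sup_left, h3⟩

open Classical in
/-- Key lemma: the `≤` direction, assuming `b ≤ a`. -/
lemma stmt2_key {L S : Type*} [Lattice L] [Fintype L]
    [SemilatticeSup S] [OrderBot S]
    (d : L → L → S)
    (hD0 : ∀ x : L, d x x = ⊥)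
    (hD1 : ∀ x y z : L, z ≤ y → y ≤ x → d x z = d x y ⊔ d y z)
    (hD2 : ∀ x y : L, d x y = d (x ⊔ y) y ∧ d x y = d x (x ⊓ y))
    (m : L → L)
    (hm : ∀ p : L, SupIrred p → m p < p ∧ ∀ x : L, x < p → x ≤ m p)
    (a : L) : ∀ b : L, b ≤ a →
    d a b ≤
      (Finset.univ.filter fun p : L => SupIrred p ∧ p ≤ a ∧ ¬ p ≤ b).sup
        (fun p => d p (m p)) := by
  induction a using WellFoundedLT.induction with
  | _ a IH =>
  intro b hba
  rcases eq_or_lt_of_le hba with rfl | hlt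
  · simp [hD0]
  -- choose c maximal with b ≤ c < a
  obtain ⟨c, hc, hcmax⟩ : ∃ c ∈ (Finset.univ.filter fun x : L => b ≤ x ∧ x < a),
      ∀ x ∈ (Finset.univ.filter fun x : L => b ≤ x ∧ x < a), ¬ c < x := by
    obtain ⟨c, hc⟩ := Finset.exists_maximal
      (s := Finset.univ.filter fun x : L => b ≤ x ∧ x < a) (by
        exact ⟨b, by simp [hlt]⟩)
    exact ⟨c, hc.1, fun x hx hcx => absurd (hcx.trans_le (hc.2 hx hcx.le)) (lt_irrefl _)⟩
  simp only [Finset.mem_filter, Finset.mem_univ, true_and] at hc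
  obtain ⟨hbc, hca⟩ := hc
  -- choose sup-irreducible p ≤ a with ¬ p ≤ c
  obtain ⟨p, hpirr, hpa, hpc⟩ := exists_supIrred_le_not_le (a := a) (c := c)
    (fun h => absurd (le_antisymm hca.le h) hca.ne)
  -- a = p ⊔ c
  have hpca : p ⊔ c = a := by
    by_contra h
    have hlt' : p ⊔ c < a := lt_of_le_of_ne (sup_le hpa hca.le) h
    exact hcmax (p ⊔ c)
      (by simp only [Finset.mem_filter, Finset.mem_univ, true_and];
          exact ⟨le_trans hbc le_sup_right, hlt'⟩)
      (lt_of_le_of_ne le_sup_right fun h' => hpc (le_sup_left.trans h'.ge))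
  have hmp := hm p hpirr
  have hpcp : p ⊓ c < p := lt_of_le_of_ne inf_le_left (fun h => hpc (h ▸ inf_le_right))
  have hpcm : p ⊓ c ≤ m p := hmp.2 _ hpcp
  -- d a b = d a c ⊔ d c b
  have h1 : d a b = d a c ⊔ d c b := hD1 a c b hbc hca.le
  -- d a c = d p c = d p (p ⊓ c) = d p (m p) ⊔ d (m p) (p ⊓ c)
  have h2 : d a c = d p (m p) ⊔ d (m p) (p ⊓ c) := by
    have e1 : d p c = d a c := by rw [(hD2 p c).1, hpca]
    rw [← e1, (hD2 p c).2, hD1 p (m p) (p ⊓ c) hpcm hmp.1.le]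
  set F := (Finset.univ.filter fun q : L => SupIrred q ∧ q ≤ a ∧ ¬ q ≤ b).sup
        (fun q => d q (m q)) with hF
  have hpF : d p (m p) ≤ F := by
    rw [hF]
    refine Finset.le_sup (f := fun q => d q (m q)) ?_
    simp only [Finset.mem_filter, Finset.mem_univ, true_and]
    exact ⟨hpirr, hpa, fun h => hpc (le_trans h hbc)⟩
  have hmF : d (m p) (p ⊓ c) ≤ F := by
    refine le_trans (IH (m p) (lt_of_lt_of_le hmp.1 hpa) (p ⊓ c) hpcm) ?_
    refine Finset.sup_mono (fun q hq => ?_)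
    simp only [Finset.mem_filter, Finset.mem_univ, true_and] at hq ⊢
    obtain ⟨hq1, hq2, hq3⟩ := hq
    exact ⟨hq1, le_trans hq2 (le_trans hmp.1.le hpa),
      fun h => hq3 (le_inf (le_trans hq2 hmp.1.le) (le_trans h hbc))⟩
  have hcF : d c b ≤ F := by
    refine le_trans (IH c hca b hbc) ?_
    refine Finset.sup_mono (fun q hq => ?_)
    simp only [Finset.mem_filter, Finset.mem_univ, true_and] at hq ⊢
    exact ⟨hq.1, le_trans hq.2.1 hca.le, hq.2.2⟩
  rw [h1, h2]
  exact sup_le (sup_le hpF hmF) hcF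

open Classical in
/-- in a finite lattice L, for any S-valued difference operation,
a ∖ b is the join of the p ∖ p⁎ over all join-irreducible p ≤ a with p ≰ b,
where m p = p⁎ is the (unique) lower cover of the join-irreducible p. -/
theorem stmt2 {L S : Type*} [Lattice L] [Fintype L]
    [SemilatticeSup S] [OrderBot S]
    (d : L → L → S)
    (hD0 : ∀ x : L, d x x = ⊥)
    (hD1 : ∀ x y z : L, z ≤ y → y ≤ x → d x z = d x y ⊔ d y z)
    (hD2 : ∀ x y : L, d x y = d (x ⊔ y) y ∧ d x y = d x (x ⊓ y))
    (m : L → L)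
    (hm : ∀ p : L, SupIrred p → m p < p ∧ ∀ x : L, x < p → x ≤ m p)
    (a b : L) :
    d a b =
      (Finset.univ.filter fun p : L => SupIrred p ∧ p ≤ a ∧ ¬ p ≤ b).sup
        (fun p => d p (m p)) := by
  apply le_antisymm
  · -- reduce to b ≤ a via d a b = d a (a ⊓ b)
    have hfilter : (Finset.univ.filter fun p : L => SupIrred p ∧ p ≤ a ∧ ¬ p ≤ a ⊓ b)
        = (Finset.univ.filter fun p : L => SupIrred p ∧ p ≤ a ∧ ¬ p ≤ b) := by
      apply Finset.filter_congr
      intro p _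
      constructor
      · rintro ⟨h1, h2, h3⟩; exact ⟨h1, h2, fun h => h3 (le_inf h2 h)⟩
      · rintro ⟨h1, h2, h3⟩; exact ⟨h1, h2, fun h => h3 (le_trans h inf_le_right)⟩
    rw [(hD2 a b).2, ← hfilter]
    exact stmt2_key d hD0 hD1 hD2 m hm a (a ⊓ b) inf_le_left
  · refine Finset.sup_le fun p hp => ?_
    simp only [Finset.mem_filter, Finset.mem_univ, true_and] at hp
    obtain ⟨hpirr, hpa, hpb⟩ := hp
    have hmp := hm p hpirr
    have hpb' : p ⊓ b < p := lt_of_le_of_ne inf_le_left (fun h => hpb (h ▸ inf_le_right))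
    have h1 : d p (m p) ≤ d p (p ⊓ b) := by
      rw [hD1 p (m p) (p ⊓ b) (hmp.2 _ hpb') hmp.1.le]; exact le_sup_left
    have h2 : d p (p ⊓ b) = d (p ⊔ b) b := by rw [← (hD2 p b).2, (hD2 p b).1]
    have h3 : d (p ⊔ b) b ≤ d (a ⊔ b) b := by
      rw [hD1 (a ⊔ b) (p ⊔ b) b le_sup_right (sup_le_sup_right hpa b)]
      exact le_sup_right
    calc d p (m p) ≤ d (p ⊔ b) b := h2 ▸ h1
      _ ≤ d (a ⊔ b) b := h3
      _ = d a b := ((hD2 a b).1).symm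
end

section
/- Let S be a generalized dual Heyting algebra and let a₁, a₂, b ∈ S with a₁ ∼ a₂ (consonant). Then (a₁ ∧ a₂) ∖ b = (a₁ ∖ b) ∧ (a₂ ∖ b), where ∖ denotes the pseudo-difference in S. -/
/-- in a generalized dual Heyting algebra, if a₁ ∼ a₂ then
(a₁ ∧ a₂) ∖ b = (a₁ ∖ b) ∧ (a₂ ∖ b). -/
theorem stmt4 {S : Type*} [DistribLattice S] [OrderBot S]
    (sd : S → S → S)
    (hsd1 : ∀ a b : S, a ≤ b ⊔ sd a b)
    (hsd2 : ∀ a b x : S, a ≤ b ⊔ x → sd a b ≤ x)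
    (a₁ a₂ b : S)
    (hcons : ∃ x y : S, a₁ ≤ a₂ ⊔ x ∧ a₂ ≤ a₁ ⊔ y ∧ x ⊓ y = ⊥) :
    sd (a₁ ⊓ a₂) b = sd a₁ b ⊓ sd a₂ b := by
  obtain ⟨x, y, hx, hy, hxy⟩ := hcons
  apply le_antisymm
  · exact le_inf
      (hsd2 _ _ _ (le_trans inf_le_left (hsd1 a₁ b)))
      (hsd2 _ _ _ (le_trans inf_le_right (hsd1 a₂ b)))
  · have h1 : sd a₁ b ≤ sd (a₁ ⊓ a₂) b ⊔ x := by
      apply hsd2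
      have : a₁ ≤ (a₁ ⊓ a₂) ⊔ x := by
        calc a₁ = a₁ ⊓ (a₂ ⊔ x) := (inf_eq_left.mpr hx).symm
        _ = (a₁ ⊓ a₂) ⊔ (a₁ ⊓ x) := inf_sup_left a₁ a₂ x
        _ ≤ (a₁ ⊓ a₂) ⊔ x := sup_le_sup_left inf_le_right _
      calc a₁ ≤ (a₁ ⊓ a₂) ⊔ x := this
      _ ≤ (b ⊔ sd (a₁ ⊓ a₂) b) ⊔ x := sup_le_sup_right (hsd1 _ _) _
      _ = b ⊔ (sd (a₁ ⊓ a₂) b ⊔ x) := sup_assoc ..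
    have h2 : sd a₂ b ≤ sd (a₁ ⊓ a₂) b ⊔ y := by
      apply hsd2
      have : a₂ ≤ (a₁ ⊓ a₂) ⊔ y := by
        calc a₂ = a₂ ⊓ (a₁ ⊔ y) := (inf_eq_left.mpr hy).symm
        _ = (a₂ ⊓ a₁) ⊔ (a₂ ⊓ y) := inf_sup_left a₂ a₁ y
        _ ≤ (a₁ ⊓ a₂) ⊔ y := sup_le_sup (le_of_eq (inf_comm _ _)) inf_le_right
      calc a₂ ≤ (a₁ ⊓ a₂) ⊔ y := this
      _ ≤ (b ⊔ sd (a₁ ⊓ a₂) b) ⊔ y := sup_le_sup_right (hsd1 _ _) _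
      _ = b ⊔ (sd (a₁ ⊓ a₂) b ⊔ y) := sup_assoc ..
    calc sd a₁ b ⊓ sd a₂ b
        ≤ (sd (a₁ ⊓ a₂) b ⊔ x) ⊓ (sd (a₁ ⊓ a₂) b ⊔ y) := inf_le_inf h1 h2
      _ = sd (a₁ ⊓ a₂) b ⊔ (x ⊓ y) := (sup_inf_left ..).symm
      _ = sd (a₁ ⊓ a₂) b := by rw [hxy, sup_bot_eq]
end

section
/- Let S be a generalized dual Heyting algebra and a, b₁, b₂ ∈ S with b₁ ∼ b₂ (consonant). Then a ∖ (b₁ ∨ b₂) = (a ∖ b₁) ∧ (a ∖ b₂). -/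
/-- in a generalized dual Heyting algebra, if b₁ ∼ b₂ then
a ∖ (b₁ ∨ b₂) = (a ∖ b₁) ∧ (a ∖ b₂). -/
theorem stmt5 {S : Type*} [DistribLattice S] [OrderBot S]
    (sd : S → S → S)
    (hsd1 : ∀ a b : S, a ≤ b ⊔ sd a b)
    (hsd2 : ∀ a b x : S, a ≤ b ⊔ x → sd a b ≤ x)
    (a b₁ b₂ : S)
    (hcons : ∃ x y : S, b₁ ≤ b₂ ⊔ x ∧ b₂ ≤ b₁ ⊔ y ∧ x ⊓ y = ⊥) :
    sd a (b₁ ⊔ b₂) = sd a b₁ ⊓ sd a b₂ := by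
  obtain ⟨x, y, hx, hy, hxy⟩ := hcons
  apply le_antisymm
  · refine le_inf (hsd2 _ _ _ ?_) (hsd2 _ _ _ ?_)
    · exact (hsd1 a b₁).trans (sup_le (le_sup_of_le_left le_sup_left) le_sup_right)
    · exact (hsd1 a b₂).trans (sup_le (le_sup_of_le_left le_sup_right) le_sup_right)
  · set s := sd a (b₁ ⊔ b₂) with hs
    have h1 : sd a b₁ ≤ s ⊔ y := by
      refine hsd2 _ _ _ ?_
      refine (hsd1 a (b₁ ⊔ b₂)).trans ?_
      refine sup_le (sup_le le_sup_left ?_) ?_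
      · exact hy.trans (sup_le le_sup_left (le_sup_of_le_right le_sup_right))
      · exact le_sup_of_le_right le_sup_left
    have h2 : sd a b₂ ≤ s ⊔ x := by
      refine hsd2 _ _ _ ?_
      refine (hsd1 a (b₁ ⊔ b₂)).trans ?_
      refine sup_le (sup_le ?_ le_sup_left) ?_
      · exact hx.trans (sup_le le_sup_left (le_sup_of_le_right le_sup_right))
      · exact le_sup_of_le_right le_sup_left
    calc sd a b₁ ⊓ sd a b₂ ≤ (s ⊔ y) ⊓ (s ⊔ x) := inf_le_inf h1 h2
      _ = s ⊔ (y ⊓ x) := (sup_inf_left s y x).symm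
      _ = s := by rw [inf_comm, hxy, sup_bot_eq]
end

section
/- Let S be a generalized dual Heyting algebra and a₁, a₂, b₁, b₂ ∈ S. If a₁ ∼ a₂ (consonant) and a₁ ∧ a₂ ≤ b₁ ∧ b₂, then (a₁ ∖ b₁) ∧ (a₂ ∖ b₂) = 0. -/
/-- in a generalized dual Heyting algebra, if a₁ ∼ a₂ and
a₁ ∧ a₂ ≤ b₁ ∧ b₂ then (a₁ ∖ b₁) ∧ (a₂ ∖ b₂) = 0. -/
theorem stmt7 {S : Type*} [DistribLattice S] [OrderBot S]
    (sd : S → S → S)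
    (hsd1 : ∀ a b : S, a ≤ b ⊔ sd a b)
    (hsd2 : ∀ a b x : S, a ≤ b ⊔ x → sd a b ≤ x)
    (a₁ a₂ b₁ b₂ : S)
    (hcons : ∃ x y : S, a₁ ≤ a₂ ⊔ x ∧ a₂ ≤ a₁ ⊔ y ∧ x ⊓ y = ⊥)
    (hle : a₁ ⊓ a₂ ≤ b₁ ⊓ b₂) :
    sd a₁ b₁ ⊓ sd a₂ b₂ = ⊥ := by
  obtain ⟨x, y, h1, h2, hxy⟩ := hcons
  have k1 : sd a₁ b₁ ≤ x := by
    apply hsd2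
    calc a₁ ≤ a₁ ⊓ (a₂ ⊔ x) := le_inf le_rfl h1
    _ = (a₁ ⊓ a₂) ⊔ (a₁ ⊓ x) := inf_sup_left a₁ a₂ x
    _ ≤ b₁ ⊔ x := sup_le_sup (hle.trans inf_le_left) inf_le_right
  have k2 : sd a₂ b₂ ≤ y := by
    apply hsd2
    calc a₂ ≤ a₂ ⊓ (a₁ ⊔ y) := le_inf le_rfl h2
    _ = (a₂ ⊓ a₁) ⊔ (a₂ ⊓ y) := inf_sup_left a₂ a₁ y
    _ ≤ b₂ ⊔ y := sup_le_sup ((inf_comm a₂ a₁ ▸ hle).trans inf_le_right) inf_le_right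
  exact le_bot_iff.mp (hxy ▸ inf_le_inf k1 k2)
end

section
/- Let D and L be distributive lattices, E and S generalized dual Heyting algebras with D a sublattice of E and S a sublattice of L, and let g : E → L be a lattice homomorphism such that g[D] is a consonant subset of S. Let Σ ⊆ D generate D as a lattice. If g(x ∖_E y) ≤ g(x) ∖_S g(y) for all x, y ∈ Σ, then g(x ∖_E y) ≤ g(x) ∖_S g(y) for all x, y ∈ D. -/
/-- Lemma on generation of the inequality g(x ∖_E y) ≤ g(x) ∖_S g(y)
from a generating set Σ of the sublattice D of E, when g[D] is a consonant
subset of the sublattice S of L. Sublattices are modelled as subsets closed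
under ⊔ and ⊓, and pseudo-differences by their least-element property. -/
theorem stmt9 {E L : Type*} [DistribLattice E] [DistribLattice L] [OrderBot L]
    (D : Set E) (hDsub : ∀ x ∈ D, ∀ y ∈ D, x ⊔ y ∈ D ∧ x ⊓ y ∈ D)
    (S : Set L) (hSsub : ∀ x ∈ S, ∀ y ∈ S, x ⊔ y ∈ S ∧ x ⊓ y ∈ S)
    -- E is a generalized dual Heyting algebra with pseudo-difference sdE
    (sdE : E → E → E)
    (hsdE1 : ∀ a b : E, a ≤ b ⊔ sdE a b)
    (hsdE2 : ∀ a b x : E, a ≤ b ⊔ x → sdE a b ≤ x)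
    -- S is a generalized dual Heyting algebra with pseudo-difference sdS
    (sdS : L → L → L)
    (hsdS0 : ∀ a ∈ S, ∀ b ∈ S, sdS a b ∈ S)
    (hsdS1 : ∀ a ∈ S, ∀ b ∈ S, a ≤ b ⊔ sdS a b)
    (hsdS2 : ∀ a ∈ S, ∀ b ∈ S, ∀ x ∈ S, a ≤ b ⊔ x → sdS a b ≤ x)
    -- g : E → L is a lattice homomorphism mapping D into S
    (g : E → L)
    (hgsup : ∀ x y : E, g (x ⊔ y) = g x ⊔ g y)
    (hginf : ∀ x y : E, g (x ⊓ y) = g x ⊓ g y)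
    (hgD : ∀ x ∈ D, g x ∈ S)
    -- g[D] is a consonant subset of S
    (hcons : ∀ a ∈ D, ∀ b ∈ D, ∃ x ∈ S, ∃ y ∈ S,
      g a ≤ g b ⊔ x ∧ g b ≤ g a ⊔ y ∧ x ⊓ y = ⊥)
    -- Sg generates D as a lattice
    (Sg : Set E) (hSgD : Sg ⊆ D)
    (hgen : ∀ T : Set E, Sg ⊆ T →
      (∀ x ∈ T, ∀ y ∈ T, x ⊔ y ∈ T ∧ x ⊓ y ∈ T) → D ⊆ T)
    (hbase : ∀ x ∈ Sg, ∀ y ∈ Sg, g (sdE x y) ≤ sdS (g x) (g y)) :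
    ∀ x ∈ D, ∀ y ∈ D, g (sdE x y) ≤ sdS (g x) (g y) := by

  have hgmono : ∀ a b : E, a ≤ b → g a ≤ g b := by
    intro a b h
    have h2 : g a ⊔ g b = g b := by rw [← hgsup, sup_eq_right.mpr h]
    exact le_trans le_sup_left h2.le
  have key : ∀ p q s x y : L, p ≤ s ⊔ x → q ≤ s ⊔ y → x ⊓ y = ⊥ → p ⊓ q ≤ s := by
    intro p q s x y hp hq hxy
    calc p ⊓ q ≤ (s ⊔ x) ⊓ (s ⊔ y) := inf_le_inf hp hq
      _ = s ⊔ x ⊓ y := (sup_inf_left s x y).symm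
      _ = s := by rw [hxy, sup_bot_eq]
  -- Lemma A: closure in the first argument
  have lemA_sup : ∀ a ∈ D, ∀ b ∈ D, ∀ c ∈ D,
      g (sdE a c) ≤ sdS (g a) (g c) → g (sdE b c) ≤ sdS (g b) (g c) →
      g (sdE (a ⊔ b) c) ≤ sdS (g (a ⊔ b)) (g c) := by
    intro a ha b hb c hc Pa Pb
    have gaS := hgD a ha; have gbS := hgD b hb; have gcS := hgD c hc
    have gabS : g a ⊔ g b ∈ S := (hSsub _ gaS _ gbS).1
    have sS : sdS (g a ⊔ g b) (g c) ∈ S := hsdS0 _ gabS _ gcS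
    have h1 : sdE (a ⊔ b) c ≤ sdE a c ⊔ sdE b c := by
      apply hsdE2
      calc a ⊔ b ≤ (c ⊔ sdE a c) ⊔ (c ⊔ sdE b c) := sup_le_sup (hsdE1 a c) (hsdE1 b c)
        _ = c ⊔ (sdE a c ⊔ sdE b c) := by rw [sup_sup_sup_comm, sup_idem]
    have h2 : sdS (g a) (g c) ≤ sdS (g a ⊔ g b) (g c) :=
      hsdS2 _ gaS _ gcS _ sS (le_trans le_sup_left (hsdS1 _ gabS _ gcS))
    have h3 : sdS (g b) (g c) ≤ sdS (g a ⊔ g b) (g c) :=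
      hsdS2 _ gbS _ gcS _ sS (le_trans le_sup_right (hsdS1 _ gabS _ gcS))
    calc g (sdE (a ⊔ b) c) ≤ g (sdE a c ⊔ sdE b c) := hgmono _ _ h1
      _ = g (sdE a c) ⊔ g (sdE b c) := hgsup _ _
      _ ≤ sdS (g a ⊔ g b) (g c) := sup_le (le_trans Pa h2) (le_trans Pb h3)
      _ = sdS (g (a ⊔ b)) (g c) := by rw [hgsup]
  have lemA_inf : ∀ a ∈ D, ∀ b ∈ D, ∀ c ∈ D,
      g (sdE a c) ≤ sdS (g a) (g c) → g (sdE b c) ≤ sdS (g b) (g c) →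
      g (sdE (a ⊓ b) c) ≤ sdS (g (a ⊓ b)) (g c) := by
    intro a ha b hb c hc Pa Pb
    obtain ⟨x, hxS, y, hyS, hax, hbx, hxy⟩ := hcons a ha b hb
    have gaS := hgD a ha; have gbS := hgD b hb; have gcS := hgD c hc
    have gabS : g a ⊓ g b ∈ S := (hSsub _ gaS _ gbS).2
    have sS : sdS (g a ⊓ g b) (g c) ∈ S := hsdS0 _ gabS _ gcS
    have hs1 : g a ⊓ g b ≤ g c ⊔ sdS (g a ⊓ g b) (g c) := hsdS1 _ gabS _ gcS
    have h1 : sdE (a ⊓ b) c ≤ sdE a c ⊓ sdE b c := by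
      apply hsdE2
      calc a ⊓ b ≤ (c ⊔ sdE a c) ⊓ (c ⊔ sdE b c) := inf_le_inf (hsdE1 a c) (hsdE1 b c)
        _ = c ⊔ sdE a c ⊓ sdE b c := (sup_inf_left _ _ _).symm
    have hP : sdS (g a) (g c) ≤ sdS (g a ⊓ g b) (g c) ⊔ x := by
      apply hsdS2 _ gaS _ gcS _ ((hSsub _ sS _ hxS).1)
      calc g a = g a ⊓ (g b ⊔ x) := (inf_eq_left.mpr hax).symm
        _ = g a ⊓ g b ⊔ g a ⊓ x := inf_sup_left _ _ _
        _ ≤ g a ⊓ g b ⊔ x := sup_le_sup_left inf_le_right _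
        _ ≤ (g c ⊔ sdS (g a ⊓ g b) (g c)) ⊔ x := sup_le_sup_right hs1 x
        _ = g c ⊔ (sdS (g a ⊓ g b) (g c) ⊔ x) := sup_assoc _ _ _
    have hQ : sdS (g b) (g c) ≤ sdS (g a ⊓ g b) (g c) ⊔ y := by
      apply hsdS2 _ gbS _ gcS _ ((hSsub _ sS _ hyS).1)
      calc g b = g b ⊓ (g a ⊔ y) := (inf_eq_left.mpr hbx).symm
        _ = g b ⊓ g a ⊔ g b ⊓ y := inf_sup_left _ _ _
        _ ≤ g a ⊓ g b ⊔ y := sup_le_sup (inf_comm (g b) (g a)).le inf_le_right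
        _ ≤ (g c ⊔ sdS (g a ⊓ g b) (g c)) ⊔ y := sup_le_sup_right hs1 y
        _ = g c ⊔ (sdS (g a ⊓ g b) (g c) ⊔ y) := sup_assoc _ _ _
    calc g (sdE (a ⊓ b) c) ≤ g (sdE a c ⊓ sdE b c) := hgmono _ _ h1
      _ = g (sdE a c) ⊓ g (sdE b c) := hginf _ _
      _ ≤ sdS (g a) (g c) ⊓ sdS (g b) (g c) := inf_le_inf Pa Pb
      _ ≤ sdS (g a ⊓ g b) (g c) := key _ _ _ x y hP hQ hxy
      _ = sdS (g (a ⊓ b)) (g c) := by rw [hginf]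
  -- Lemma B: closure in the second argument
  have lemB_sup : ∀ a ∈ D, ∀ b ∈ D, ∀ c ∈ D,
      g (sdE a b) ≤ sdS (g a) (g b) → g (sdE a c) ≤ sdS (g a) (g c) →
      g (sdE a (b ⊔ c)) ≤ sdS (g a) (g (b ⊔ c)) := by
    intro a ha b hb c hc Pb Pc
    obtain ⟨x, hxS, y, hyS, hbx, hcy, hxy⟩ := hcons b hb c hc
    have gaS := hgD a ha; have gbS := hgD b hb; have gcS := hgD c hc
    have gbcS : g b ⊔ g c ∈ S := (hSsub _ gbS _ gcS).1
    have sS : sdS (g a) (g b ⊔ g c) ∈ S := hsdS0 _ gaS _ gbcS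
    have hs1 : g a ≤ (g b ⊔ g c) ⊔ sdS (g a) (g b ⊔ g c) := hsdS1 _ gaS _ gbcS
    have h1 : sdE a (b ⊔ c) ≤ sdE a b :=
      hsdE2 _ _ _ (le_trans (hsdE1 a b) (sup_le_sup_right le_sup_left _))
    have h2 : sdE a (b ⊔ c) ≤ sdE a c :=
      hsdE2 _ _ _ (le_trans (hsdE1 a c) (sup_le_sup_right le_sup_right _))
    have hP : sdS (g a) (g b) ≤ sdS (g a) (g b ⊔ g c) ⊔ y := by
      apply hsdS2 _ gaS _ gbS _ ((hSsub _ sS _ hyS).1)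
      refine le_trans hs1 ?_
      apply sup_le (sup_le le_sup_left ?_) (le_sup_of_le_right le_sup_left)
      exact le_trans hcy (sup_le le_sup_left (le_sup_of_le_right le_sup_right))
    have hQ : sdS (g a) (g c) ≤ sdS (g a) (g b ⊔ g c) ⊔ x := by
      apply hsdS2 _ gaS _ gcS _ ((hSsub _ sS _ hxS).1)
      refine le_trans hs1 ?_
      apply sup_le (sup_le ?_ le_sup_left) (le_sup_of_le_right le_sup_left)
      exact le_trans hbx (sup_le le_sup_left (le_sup_of_le_right le_sup_right))
    calc g (sdE a (b ⊔ c)) ≤ g (sdE a b) ⊓ g (sdE a c) :=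
          le_inf (hgmono _ _ h1) (hgmono _ _ h2)
      _ ≤ sdS (g a) (g b) ⊓ sdS (g a) (g c) := inf_le_inf Pb Pc
      _ ≤ sdS (g a) (g b ⊔ g c) := key _ _ _ y x hP hQ (by rw [inf_comm, hxy])
      _ = sdS (g a) (g (b ⊔ c)) := by rw [hgsup]
  have lemB_inf : ∀ a ∈ D, ∀ b ∈ D, ∀ c ∈ D,
      g (sdE a b) ≤ sdS (g a) (g b) → g (sdE a c) ≤ sdS (g a) (g c) →
      g (sdE a (b ⊓ c)) ≤ sdS (g a) (g (b ⊓ c)) := by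
    intro a ha b hb c hc Pb Pc
    have gaS := hgD a ha; have gbS := hgD b hb; have gcS := hgD c hc
    have gbcS : g b ⊓ g c ∈ S := (hSsub _ gbS _ gcS).2
    have sS : sdS (g a) (g b ⊓ g c) ∈ S := hsdS0 _ gaS _ gbcS
    have hs1 : g a ≤ (g b ⊓ g c) ⊔ sdS (g a) (g b ⊓ g c) := hsdS1 _ gaS _ gbcS
    have h1 : sdE a (b ⊓ c) ≤ sdE a b ⊔ sdE a c := by
      apply hsdE2
      have hb1 : a ≤ b ⊔ (sdE a b ⊔ sdE a c) :=
        le_trans (hsdE1 a b) (sup_le_sup_left le_sup_left _)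
      have hc1 : a ≤ c ⊔ (sdE a b ⊔ sdE a c) :=
        le_trans (hsdE1 a c) (sup_le_sup_left le_sup_right _)
      rw [sup_inf_right]
      exact le_inf hb1 hc1
    have hP : sdS (g a) (g b) ≤ sdS (g a) (g b ⊓ g c) :=
      hsdS2 _ gaS _ gbS _ sS (le_trans hs1 (sup_le_sup_right inf_le_left _))
    have hQ : sdS (g a) (g c) ≤ sdS (g a) (g b ⊓ g c) :=
      hsdS2 _ gaS _ gcS _ sS (le_trans hs1 (sup_le_sup_right inf_le_right _))
    calc g (sdE a (b ⊓ c)) ≤ g (sdE a b ⊔ sdE a c) := hgmono _ _ h1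
      _ = g (sdE a b) ⊔ g (sdE a c) := hgsup _ _
      _ ≤ sdS (g a) (g b ⊓ g c) := sup_le (le_trans Pb hP) (le_trans Pc hQ)
      _ = sdS (g a) (g (b ⊓ c)) := by rw [hginf]
  -- Step 1: generators in the second argument
  have step1 : ∀ y ∈ Sg, ∀ x ∈ D, g (sdE x y) ≤ sdS (g x) (g y) := by
    intro y hy x hx
    have hyD := hSgD hy
    have hsub : D ⊆ {z | z ∈ D ∧ g (sdE z y) ≤ sdS (g z) (g y)} := by
      apply hgen
      · intro z hz
        exact ⟨hSgD hz, hbase z hz y hy⟩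
      · rintro p ⟨hpD, hp⟩ q ⟨hqD, hq⟩
        exact ⟨⟨(hDsub p hpD q hqD).1, lemA_sup p hpD q hqD y hyD hp hq⟩,
               ⟨(hDsub p hpD q hqD).2, lemA_inf p hpD q hqD y hyD hp hq⟩⟩
    exact (hsub hx).2
  -- Step 2: all of D in the second argument
  intro x hx y hy
  have hsub : D ⊆ {z | z ∈ D ∧ g (sdE x z) ≤ sdS (g x) (g z)} := by
    apply hgen
    · intro z hz
      exact ⟨hSgD hz, step1 z hz x hx⟩
    · rintro p ⟨hpD, hp⟩ q ⟨hqD, hq⟩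
      exact ⟨⟨(hDsub p hpD q hqD).1, lemB_sup x hx p hpD q hqD hp hq⟩,
             ⟨(hDsub p hpD q hqD).2, lemB_inf x hx p hpD q hqD hp hq⟩⟩
  exact (hsub hy).2
end

section
/- A generalized spectral space X is completely normal if and only if its lattice of compact open subsets is completely normal as a distributive lattice. -/
/-- Hofmann–Mislove style lemma: in a quasi-sober space, a nonempty directed
family of nonempty compact open sets has a common point. -/
lemma hm_light {X : Type*} [TopologicalSpace X] [QuasiSober X]
    (S : Set (Set X))
    (hopen : ∀ s ∈ S, IsOpen s) (hcomp : ∀ s ∈ S, IsCompact s)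
    (hsne : ∀ s ∈ S, s.Nonempty) (hSne : S.Nonempty)
    (hdir : ∀ s ∈ S, ∀ t ∈ S, ∃ r ∈ S, r ⊆ s ∧ r ⊆ t) :
    ∃ z : X, ∀ s ∈ S, z ∈ s := by
  set F : Set (Set X) := {C | IsClosed C ∧ ∀ s ∈ S, (C ∩ s).Nonempty} with hF
  have hXF : (Set.univ : Set X) ∈ F :=
    ⟨isClosed_univ, fun s hs => by simpa using hsne s hs⟩
  have hchaincond : ∀ c ⊆ F, IsChain (· ⊆ ·) c → c.Nonempty →
      ∃ lb ∈ F, ∀ s ∈ c, lb ⊆ s := by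
    intro c hcF hchain hcne
    refine ⟨⋂₀ c, ⟨isClosed_sInter fun C hC => (hcF hC).1, fun s hs => ?_⟩,
      fun t ht => Set.sInter_subset_of_mem ht⟩
    by_contra hempty
    rw [Set.not_nonempty_iff_eq_empty] at hempty
    have hempty' : (s ∩ ⋂ C : c, (C : Set X)) = ∅ := by
      rwa [Set.sInter_eq_iInter, Set.inter_comm] at hempty
    obtain ⟨t, ht⟩ := (hcomp s hs).elim_finite_subfamily_closed (fun C : c => (C : Set X))
      (fun C => (hcF C.2).1) hempty'
    rcases t.eq_empty_or_nonempty with rfl | htne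
    · simp only [Finset.notMem_empty, Set.iInter_of_empty, Set.iInter_univ,
        Set.inter_univ] at ht
      exact (hsne s hs).ne_empty ht
    · obtain ⟨m, hmt, hmmin⟩ := t.exists_minimal htne
      have hmle : ∀ C ∈ t, (m : Set X) ⊆ (C : Set X) := by
        intro C hC
        rcases eq_or_ne m C with rfl | hne
        · exact le_rfl
        · rcases hchain.total m.2 C.2 with h | h
          · exact h
          · have hnot : ¬ C < m := fun hlt => hlt.2 (hmmin hC hlt.1)
            rcases eq_or_lt_of_le (show C ≤ m from h) with h' | h'
            · exact h' ▸ le_rfl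
            · exact absurd h' hnot
      obtain ⟨x, hxm, hxs⟩ := (hcF m.2).2 s hs
      have hmem : x ∈ s ∩ ⋂ C ∈ t, (C : Set X) :=
        ⟨hxs, Set.mem_iInter₂.2 fun C hC => hmle C hC hxm⟩
      exact Set.eq_empty_iff_forall_notMem.1 ht x hmem
  obtain ⟨C, -, hCF, hCmin⟩ := zorn_superset_nonempty F hchaincond Set.univ hXF
  · -- C is a minimal closed set meeting every member of S
    have hCclosed : IsClosed C := hCF.1
    have hCmeets : ∀ s ∈ S, (C ∩ s).Nonempty := hCF.2
    -- C is irreducible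
    have hCne : C.Nonempty := by
      obtain ⟨s₀, hs₀⟩ := hSne
      exact (hCmeets s₀ hs₀).mono Set.inter_subset_left
    have hirr : IsIrreducible C := by
      refine ⟨hCne, fun U V hU hV hCU hCV => ?_⟩
      by_contra hempty
      rw [Set.not_nonempty_iff_eq_empty] at hempty
      -- C \ U is a proper closed subset of C, so not in F
      have hnotF : ∀ W : Set X, IsOpen W → (C ∩ W).Nonempty → ∃ s ∈ S, (C \ W) ∩ s = ∅ := by
        intro W hW hCW
        have hsub : C \ W ⊆ C := Set.diff_subset
        have hne : C \ W ≠ C := by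
          intro h
          obtain ⟨x, hxC, hxW⟩ := hCW
          have : x ∈ C \ W := by rw [h]; exact hxC
          exact this.2 hxW
        by_contra hc
        push_neg at hc
        have hmem : C \ W ∈ F := ⟨hCclosed.sdiff hW, fun s hs => hc s hs⟩
        exact hne (Set.Subset.antisymm hsub (hCmin hmem hsub))
      obtain ⟨s₁, hs₁, hs₁e⟩ := hnotF U hU hCU
      obtain ⟨s₂, hs₂, hs₂e⟩ := hnotF V hV hCV
      obtain ⟨r, hr, hr₁, hr₂⟩ := hdir s₁ hs₁ s₂ hs₂
      obtain ⟨w, hwC, hwr⟩ := hCmeets r hr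
      have hwU : w ∈ U := by
        by_contra h
        exact Set.eq_empty_iff_forall_notMem.1 hs₁e w ⟨⟨hwC, h⟩, hr₁ hwr⟩
      have hwV : w ∈ V := by
        by_contra h
        exact Set.eq_empty_iff_forall_notMem.1 hs₂e w ⟨⟨hwC, h⟩, hr₂ hwr⟩
      exact Set.eq_empty_iff_forall_notMem.1 hempty w ⟨hwC, hwU, hwV⟩
    obtain ⟨z, hz⟩ := QuasiSober.sober hirr hCclosed
    refine ⟨z, fun s hs => ?_⟩
    obtain ⟨x, hxC, hxs⟩ := hCmeets s hs
    have hxcl : x ∈ closure ({z} : Set X) := hz.symm ▸ hxC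
    obtain ⟨w, hws, hwz⟩ := mem_closure_iff.1 hxcl s (hopen s hs) hxs
    rw [Set.mem_singleton_iff] at hwz
    exact hwz ▸ hws

/-- a generalized spectral space X (sober, with a basis of compact
open sets closed under binary intersection) is completely normal iff its lattice
of compact open subsets is completely normal as a distributive lattice. -/
theorem stmt10 {X : Type*} [TopologicalSpace X] [QuasiSober X] [T0Space X]
    (hbasis : TopologicalSpace.IsTopologicalBasis
      {U : Set X | IsCompact U ∧ IsOpen U})
    (hinter : ∀ U V : Set X, IsCompact U → IsOpen U → IsCompact V → IsOpen V →
      IsCompact (U ∩ V)) :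
    (∀ x y z : X, x ∈ closure {z} → y ∈ closure {z} →
        x ∈ closure {y} ∨ y ∈ closure {x}) ↔
    (∀ a b : Set X, IsCompact a → IsOpen a → IsCompact b → IsOpen b →
        ∃ u v : Set X, IsCompact u ∧ IsOpen u ∧ IsCompact v ∧ IsOpen v ∧
          a ⊆ b ∪ u ∧ b ⊆ a ∪ v ∧ u ∩ v = ∅) := by
  constructor
  · -- completely normal space → completely normal lattice
    intro H a b hac hao hbc hbo
    by_contra hcon
    push_neg at hcon
    -- the family of intersections u ∩ v
    set S : Set (Set X) := {s | ∃ u v : Set X, IsCompact u ∧ IsOpen u ∧ IsCompact v ∧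
      IsOpen v ∧ a ⊆ b ∪ u ∧ b ⊆ a ∪ v ∧ s = u ∩ v} with hS
    have habS : a ∩ b ∈ S := ⟨a, b, hac, hao, hbc, hbo, fun x hx => Or.inr hx,
      fun x hx => Or.inr hx, rfl⟩
    obtain ⟨z, hz⟩ := hm_light S
      (fun s ⟨u, v, _, hu, _, hv, _, _, h⟩ => h ▸ hu.inter hv)
      (fun s ⟨u, v, hu, huo, hv, hvo, _, _, h⟩ => h ▸ hinter u v hu huo hv hvo)
      (fun s ⟨u, v, hu, huo, hv, hvo, ha, hb, h⟩ =>
        h ▸ hcon u v hu huo hv hvo ha hb)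
      ⟨a ∩ b, habS⟩
      (fun s ⟨u, v, hu, huo, hv, hvo, ha, hb, h⟩ t ⟨u', v', hu', huo', hv', hvo', ha', hb', h'⟩ => by
        refine ⟨(u ∩ u') ∩ (v ∩ v'), ⟨u ∩ u', v ∩ v', hinter u u' hu huo hu' huo',
          huo.inter huo', hinter v v' hv hvo hv' hvo', hvo.inter hvo', ?_, ?_, rfl⟩, ?_, ?_⟩
        · intro x hx
          rcases ha hx with hb' | hu'' 
          · exact Or.inl hb'
          · rcases ha' hx with hb'' | hu'''
            · exact Or.inl hb''
            · exact Or.inr ⟨hu'', hu'''⟩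
        · intro x hx
          rcases hb hx with ha'' | hv''
          · exact Or.inl ha''
          · rcases hb' hx with ha''' | hv'''
            · exact Or.inl ha'''
            · exact Or.inr ⟨hv'', hv'''⟩
        · rw [h]; exact fun x ⟨⟨h1, _⟩, ⟨h2, _⟩⟩ => ⟨h1, h2⟩
        · rw [h']; exact fun x ⟨⟨_, h1⟩, ⟨_, h2⟩⟩ => ⟨h1, h2⟩)
    -- z specializes into a \ b and into b \ a
    have key : ∀ p q : Set X, IsCompact p → IsOpen p → IsCompact q → IsOpen q →
        (∀ u : Set X, IsCompact u → IsOpen u → p ⊆ q ∪ u → z ∈ u) →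
        (closure ({z} : Set X) ∩ (p \ q)).Nonempty := by
      intro p q hpc hpo hqc hqo hall
      by_contra hempty
      rw [Set.not_nonempty_iff_eq_empty] at hempty
      -- every point of p \ q has a compact open nbhd missing z
      have hsep : ∀ x ∈ p \ q, ∃ w : Set X, IsCompact w ∧ IsOpen w ∧ x ∈ w ∧ z ∉ w := by
        intro x hx
        have hxz : x ∉ closure ({z} : Set X) := fun h =>
          Set.eq_empty_iff_forall_notMem.1 hempty x ⟨h, hx⟩
        rw [mem_closure_iff] at hxz
        push_neg at hxz
        obtain ⟨o, ho, hxo, hoz⟩ := hxz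
        obtain ⟨w, ⟨hwc, hwo⟩, hxw, hwsub⟩ := hbasis.exists_subset_of_mem_open hxo ho
        refine ⟨w, hwc, hwo, hxw, fun hzw => ?_⟩
        exact Set.eq_empty_iff_forall_notMem.1 hoz z ⟨hwsub hzw, rfl⟩
      choose w hwc hwo hxw hzw using hsep
      have hpq : IsCompact (p \ q) := hpc.inter_right hqo.isClosed_compl
      have hcover : p \ q ⊆ ⋃ x : (p \ q : Set X), w x x.2 :=
        fun x hx => Set.mem_iUnion.2 ⟨⟨x, hx⟩, hxw x hx⟩
      obtain ⟨t, ht⟩ := hpq.elim_finite_subcover (fun x : (p \ q : Set X) => w x x.2)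
        (fun x => hwo x x.2) hcover
      set u : Set X := ⋃ x ∈ t, w x x.2 with hu
      have huc : IsCompact u := t.finite_toSet.isCompact_biUnion fun x _ => hwc x x.2
      have huo : IsOpen u := isOpen_biUnion fun x _ => hwo x x.2
      have hpu : p ⊆ q ∪ u := by
        intro x hx
        by_cases hq : x ∈ q
        · exact Or.inl hq
        · exact Or.inr (ht ⟨hx, hq⟩)
      have hzu : z ∈ u := hall u huc huo hpu
      obtain ⟨x, -, hxmem⟩ := Set.mem_iUnion₂.1 hzu
      exact hzw x x.2 hxmem
    have hxA : (closure ({z} : Set X) ∩ (a \ b)).Nonempty := by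
      refine key a b hac hao hbc hbo fun u huc huo hau => ?_
      have : z ∈ u ∩ b := hz (u ∩ b) ⟨u, b, huc, huo, hbc, hbo, hau,
        fun x hx => Or.inr hx, rfl⟩
      exact this.1
    have hyB : (closure ({z} : Set X) ∩ (b \ a)).Nonempty := by
      refine key b a hbc hbo hac hao fun v hvc hvo hbv => ?_
      have : z ∈ a ∩ v := hz (a ∩ v) ⟨a, v, hac, hao, hvc, hvo,
        fun x hx => Or.inr hx, hbv, rfl⟩
      exact this.2
    obtain ⟨x, hxz, hxa, hxb⟩ := hxA
    obtain ⟨y, hyz, hyb, hya⟩ := hyB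
    rcases H x y z hxz hyz with h | h
    · obtain ⟨w, hwa, hwy⟩ := mem_closure_iff.1 h a hao hxa
      rw [Set.mem_singleton_iff] at hwy
      exact hya (hwy ▸ hwa)
    · obtain ⟨w, hwb, hwx⟩ := mem_closure_iff.1 h b hbo hyb
      rw [Set.mem_singleton_iff] at hwx
      exact hxb (hwx ▸ hwb)
  · -- completely normal lattice → completely normal space
    intro H x y z hxz hyz
    by_contra hcon
    push_neg at hcon
    obtain ⟨hxy, hyx⟩ := hcon
    rw [mem_closure_iff] at hxy hyx
    push_neg at hxy hyx
    obtain ⟨o₁, ho₁, hxo₁, h₁⟩ := hxy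
    obtain ⟨o₂, ho₂, hyo₂, h₂⟩ := hyx
    have hyo₁ : y ∉ o₁ := fun h => Set.eq_empty_iff_forall_notMem.1 h₁ y ⟨h, rfl⟩
    have hxo₂ : x ∉ o₂ := fun h => Set.eq_empty_iff_forall_notMem.1 h₂ x ⟨h, rfl⟩
    obtain ⟨a, ⟨hac, hao⟩, hxa, hao₁⟩ := hbasis.exists_subset_of_mem_open hxo₁ ho₁
    obtain ⟨b, ⟨hbc, hbo⟩, hyb, hbo₂⟩ := hbasis.exists_subset_of_mem_open hyo₂ ho₂
    have hya : y ∉ a := fun h => hyo₁ (hao₁ h)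
    have hxb : x ∉ b := fun h => hxo₂ (hbo₂ h)
    obtain ⟨u, v, huc, huo, hvc, hvo, hau, hbv, huv⟩ := H a b hac hao hbc hbo
    have hxu : x ∈ u := (hau hxa).resolve_left hxb
    have hyv : y ∈ v := (hbv hyb).resolve_left hya
    -- z is in every open neighborhood of x and of y
    obtain ⟨w, hwu, hwz⟩ := mem_closure_iff.1 hxz u huo hxu
    obtain ⟨w', hwv, hwz'⟩ := mem_closure_iff.1 hyz v hvo hyv
    rw [Set.mem_singleton_iff] at hwz hwz'
    exact Set.eq_empty_iff_forall_notMem.1 huv z ⟨hwz ▸ hwu, hwz' ▸ hwv⟩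
end

section
/- Let G be an abelian lattice-ordered group, S a distributive lattice with zero, and φ : Idc G → S a closed surjective join-homomorphism. Then I := { x ∈ G : φ(⟨x⟩) = 0 } is an ℓ-ideal of G, and there is a unique isomorphism ψ : Idc(G/I) → S with ψ(⟨x + I⟩) = φ(⟨x⟩) for all x ∈ G⁺. -/
/-- factorization of a closed surjective join-homomorphism
φ : Idc G → S through an isomorphism Idc (G/I) ≅ S, where
I = { x : φ⟨x⟩ = 0 }.  The lattice Idc G of principal ℓ-ideals is modelled at
the level of elements of G: the ideal ⟨x⟩ is represented by x, containment
⟨x⟩ ⊆ ⟨y⟩ by ∃ n, |x| ≤ n • |y|, and φ is a map G → S constant on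
ideal-equivalence classes.  The conclusion states that I is an ℓ-ideal
(a convex subgroup) and that φ induces an order-isomorphism
Idc (G/I) ≅ S, i.e. for x, y ∈ G⁺ : φ x ≤ φ y iff ⟨x + I⟩ ⊆ ⟨y + I⟩
(the latter meaning ∃ n ∃ z ∈ I⁺, x ≤ n • (y + z)); together with the
surjectivity of φ this yields the unique isomorphism ψ. -/
theorem stmt11 {G S : Type*} [Lattice G] [AddCommGroup G]
    [CovariantClass G G (· + ·) (· ≤ ·)]
    [DistribLattice S] [OrderBot S]
    (φ : G → S)
    (hwd : ∀ x y : G, (∃ n : ℕ, |x| ≤ n • |y|) → φ x ≤ φ y)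
    (hjoin : ∀ x y : G, φ (|x| + |y|) = φ x ⊔ φ y)
    (hzero : φ 0 = ⊥)
    (hsurj : Function.Surjective φ)
    (hclosed : ∀ (a₀ a₁ : G) (b : S), φ a₀ ≤ φ a₁ ⊔ b →
      ∃ x : G, (∃ n : ℕ, |a₀| ≤ n • (|a₁| + |x|)) ∧ φ x ≤ b) :
    -- I = { x : φ x = ⊥ } is an ℓ-ideal of G:
    ((∀ x y : G, φ x = ⊥ → φ y = ⊥ → φ (x - y) = ⊥) ∧
     (∀ x y : G, |x| ≤ |y| → φ y = ⊥ → φ x = ⊥)) ∧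
    -- φ induces an isomorphism Idc (G/I) ≅ S:
    (∀ x y : G, 0 ≤ x → 0 ≤ y →
      (φ x ≤ φ y ↔ ∃ (n : ℕ) (z : G), 0 ≤ z ∧ φ z = ⊥ ∧ x ≤ n • (y + z))) := by

  constructor
  · constructor
    · intro x y hx hy
      have h1 : |x - y| ≤ (1:ℕ) • |(|x| + |y|)| := by
        rw [one_smul, abs_of_nonneg (add_nonneg (abs_nonneg x) (abs_nonneg y))]
        calc |x - y| = |x + -y| := by rw [sub_eq_add_neg]
        _ ≤ |x| + |(-y)| := abs_add_le _ _
        _ = |x| + |y| := by rw [abs_neg]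
      have := hwd (x - y) (|x| + |y|) ⟨1, h1⟩
      rw [hjoin, hx, hy, sup_idem] at this
      exact le_bot_iff.mp this
    · intro x y hxy hy
      have := hwd x y ⟨1, by rwa [one_smul]⟩
      rw [hy] at this
      exact le_bot_iff.mp this
  · intro x y hx hy
    constructor
    · intro h
      obtain ⟨z, ⟨n, hn⟩, hz⟩ := hclosed x y ⊥ (by simpa using h)
      refine ⟨n, |z|, abs_nonneg z, ?_, ?_⟩
      · have := hwd (|z|) z ⟨1, by rw [one_smul, abs_abs]⟩
        exact le_bot_iff.mp (this.trans (le_bot_iff.mp hz).le)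
      · rwa [abs_of_nonneg hx, abs_of_nonneg hy] at hn
    · rintro ⟨n, z, hz0, hzb, hxn⟩
      have hyz : (0:G) ≤ y + z := add_nonneg hy hz0
      have h1 : φ x ≤ φ (y + z) := by
        refine hwd x (y + z) ⟨n, ?_⟩
        rwa [abs_of_nonneg hx, abs_of_nonneg hyz]
      have h2 : y + z = |y| + |z| := by rw [abs_of_nonneg hy, abs_of_nonneg hz0]
      rw [h2, hjoin, hzb, sup_bot_eq] at h1
      exact h1
end

section
/- Let G and H be abelian lattice-ordered groups and f : G → H an ℓ-homomorphism. Then the induced map Idc f : Idc G → Idc H, sending ⟨x⟩_G to ⟨f(x)⟩_H, is a well-defined 0-lattice homomorphism which is closed: if (Idc f)(a₀) ≤ (Idc f)(a₁) ∨ b then there exists x ∈ Idc G with a₀ ≤ a₁ ∨ x and (Idc f)(x) ≤ b. -/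
/-- for an ℓ-homomorphism f : G → H of abelian ℓ-groups, the
induced map Idc f : Idc G → Idc H, ⟨x⟩ ↦ ⟨f x⟩, is a well-defined 0-lattice
homomorphism which is closed.  Principal ℓ-ideals are modelled at the element
level: ⟨x⟩ ⊆ ⟨y⟩ iff ∃ n, |x| ≤ n • |y|; since joins and meets of principal
ideals are given by ⟨|x| + |y|⟩ and ⟨|x| ⊓ |y|⟩ and f preserves +, ⊔ and
(as proved in the first conclusion) ⊓, well-definedness/monotonicity and the
closedness condition capture the statement. -/
theorem stmt12 {G H : Type*} [Lattice G] [AddCommGroup G]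
    [CovariantClass G G (· + ·) (· ≤ ·)]
    [Lattice H] [AddCommGroup H] [CovariantClass H H (· + ·) (· ≤ ·)]
    (f : G →+ H) (hfsup : ∀ x y : G, f (x ⊔ y) = f x ⊔ f y) :
    -- f is a lattice homomorphism (meets are preserved as well):
    (∀ x y : G, f (x ⊓ y) = f x ⊓ f y) ∧
    -- Idc f is well defined and monotone (hence a 0-lattice homomorphism):
    (∀ x y : G, (∃ n : ℕ, |x| ≤ n • |y|) → ∃ n : ℕ, |f x| ≤ n • |f y|) ∧
    -- Idc f is closed:
    (∀ (a₀ a₁ : G) (b : H),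
      (∃ n : ℕ, |f a₀| ≤ n • (|f a₁| + |b|)) →
      ∃ x : G, (∃ n : ℕ, |a₀| ≤ n • (|a₁| + |x|)) ∧
        ∃ n : ℕ, |f x| ≤ n • |b|) := by
  have hmono : Monotone f := by
    intro x y hxy
    have : f x ⊔ f y = f y := by rw [← hfsup, sup_eq_right.2 hxy]
    exact le_sup_left.trans this.le
  have hinf : ∀ x y : G, f (x ⊓ y) = f x ⊓ f y := by
    intro x y
    have : x ⊓ y = -(-x ⊔ -y) := by rw [neg_sup, neg_neg, neg_neg]
    rw [this, map_neg, hfsup, map_neg, map_neg, neg_sup, neg_neg, neg_neg]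
  have habs : ∀ x : G, |f x| = f |x| := by
    intro x
    rw [abs, abs, hfsup, map_neg]
  refine ⟨hinf, ?_, ?_⟩
  · rintro x y ⟨n, hn⟩
    exact ⟨n, by rw [habs, habs, ← map_nsmul]; exact hmono hn⟩
  · rintro a₀ a₁ b ⟨n, hn⟩
    set N := n + 1 with hN
    have hbnn : (0:H) ≤ |f a₁| + |b| := add_nonneg (abs_nonneg _) (abs_nonneg _)
    have hn' : |f a₀| ≤ N • (|f a₁| + |b|) := by
      refine hn.trans ?_
      exact nsmul_le_nsmul_left hbnn (Nat.le_succ n)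
    set x := (|a₀| - N • |a₁|) ⊔ 0 with hx
    have hxnn : (0:G) ≤ x := le_sup_right
    have hxabs : |x| = x := abs_of_nonneg hxnn
    refine ⟨x, ⟨N, ?_⟩, ⟨N, ?_⟩⟩
    · have h1 : |a₀| ≤ N • |a₁| + x :=
        sub_le_iff_le_add'.1 (le_sup_left : |a₀| - N • |a₁| ≤ x)
      have hxN : x ≤ N • x := by
        rw [hN, succ_nsmul]
        exact le_add_of_nonneg_left (nsmul_nonneg hxnn n)
      have h2 : N • |a₁| + x ≤ N • (|a₁| + |x|) := by
        rw [smul_add, hxabs]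
        exact add_le_add_right hxN _
      exact h1.trans h2
    · rw [habs, hxabs, hx, hfsup, map_zero, map_sub, map_nsmul]
      refine sup_le ?_ (nsmul_nonneg (abs_nonneg _) N)
      rw [sub_le_iff_le_add', ← habs, ← habs, ← smul_add]
      exact hn'
end

section
/- Let F be a finite union of closed linear subspaces of a real topological vector space E, and let Q be a convex subset of E. Then either Q ⊆ F, or Q ∩ F is nowhere dense in Q (with the subspace topology on Q). -/
/-- if F is a finite union of closed linear subspaces of a real
topological vector space E and Q is convex, then either Q ⊆ F or Q ∩ F is
nowhere dense in Q (with the subspace topology on Q). -/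
theorem stmt14 {E : Type*} [AddCommGroup E] [Module ℝ E] [TopologicalSpace E]
    [IsTopologicalAddGroup E] [ContinuousSMul ℝ E]
    {ι : Type*} [Finite ι] (p : ι → Submodule ℝ E)
    (hp : ∀ i, IsClosed ((p i : Set E)))
    (Q : Set E) (hQ : Convex ℝ Q) :
    Q ⊆ (⋃ i, (p i : Set E)) ∨
      interior (closure ((Subtype.val ⁻¹' ⋃ i, (p i : Set E)) : Set Q)) = ∅ := by
  classical
  by_cases h : Q ⊆ ⋃ i, (p i : Set E)
  · exact Or.inl h
  right
  obtain ⟨x, hxQ, hxF⟩ := Set.not_subset.mp h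
  set F : Set E := ⋃ i, (p i : Set E) with hF
  have hFclosed : IsClosed F := isClosed_iUnion_of_finite hp
  have hSclosed : IsClosed ((Subtype.val ⁻¹' F) : Set Q) :=
    hFclosed.preimage continuous_subtype_val
  rw [hSclosed.closure_eq]
  by_contra hne
  obtain ⟨q, hq⟩ := Set.nonempty_iff_ne_empty.mpr hne
  obtain ⟨U, hUsub, hUopen, hqU⟩ := mem_interior.mp hq
  obtain ⟨V, hVopen, hVU⟩ := isOpen_induced_iff.mp hUopen
  have hqV : (q : E) ∈ V := by
    have : q ∈ Subtype.val ⁻¹' V := by rw [hVU]; exact hqU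
    exact this
  have hVF : ∀ y ∈ Q, y ∈ V → y ∈ F := by
    intro y hyQ hyV
    have : (⟨y, hyQ⟩ : Q) ∈ U := by rw [← hVU]; exact hyV
    exact hUsub this
  -- the curve t ↦ q + t • (x - q)
  set c : ℝ → E := fun t => (q : E) + t • (x - (q : E)) with hc
  have hccont : Continuous c := by
    apply continuous_const.add
    exact (continuous_id.smul continuous_const)
  have hc0 : c 0 = (q : E) := by simp [hc]
  have hpre : c ⁻¹' V ∈ nhds (0 : ℝ) := by
    have := (hccont.continuousAt (x := 0)).preimage_mem_nhds
      (by rw [hc0]; exact hVopen.mem_nhds hqV)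
    exact this
  obtain ⟨ε, hε, hball⟩ := Metric.mem_nhds_iff.mp hpre
  set T : Set ℝ := Set.Ioo 0 (min ε 1) with hT
  have hmin : (0 : ℝ) < min ε 1 := lt_min hε one_pos
  have hTinf : T.Infinite := Set.infinite_coe_iff.mp (Set.Ioo.infinite hmin)
  have hcQ : ∀ t ∈ T, c t ∈ Q := by
    intro t ht
    have h1 : 0 ≤ 1 - t := by linarith [ht.2, min_le_right ε 1]
    have h2 : 0 ≤ t := le_of_lt ht.1
    have := hQ q.2 hxQ h1 h2 (by ring)
    convert this using 1
    simp only [hc]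
    module
  have hcF : ∀ t ∈ T, ∃ i, c t ∈ p i := by
    intro t ht
    have htb : t ∈ Metric.ball (0 : ℝ) ε := by
      simp only [Metric.mem_ball, Real.dist_eq, sub_zero]
      have := ht.2
      have : t < ε := lt_of_lt_of_le ht.2 (min_le_left ε 1)
      rw [abs_of_pos ht.1]; exact this
    exact Set.mem_iUnion.mp (hVF _ (hcQ t ht) (hball htb))
  have hTne : T.Nonempty := ⟨min ε 1 / 2, by constructor <;> [linarith; linarith]⟩
  haveI : Nonempty ι := ⟨(hcF hTne.choose hTne.choose_spec).choose⟩
  set f : ℝ → ι := fun t => if h : ∃ i, c t ∈ p i then h.choose else Classical.arbitrary ι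
    with hfdef
  have hfm : ∀ t ∈ T, c t ∈ p (f t) := by
    intro t ht
    have h := hcF t ht
    simp only [hfdef, dif_pos h]
    exact h.choose_spec
  obtain ⟨t₁, ht₁, t₂, ht₂, hne12, hfeq⟩ :=
    hTinf.exists_ne_map_eq_of_mapsTo (Set.mapsTo_univ f T) Set.finite_univ
  set i := f t₁ with hi
  have hm1 : c t₁ ∈ p i := hfm t₁ ht₁
  have hm2 : c t₂ ∈ p i := by rw [hfeq]; exact hfm t₂ ht₂
  have hd : (t₁ - t₂) • (x - (q : E)) ∈ p i := by
    have := (p i).sub_mem hm1 hm2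
    have heq : c t₁ - c t₂ = (t₁ - t₂) • (x - (q : E)) := by
      simp only [hc]; module
    rwa [heq] at this
  have hxq : x - (q : E) ∈ p i := by
    have := (p i).smul_mem (t₁ - t₂)⁻¹ hd
    rwa [smul_smul, inv_mul_cancel₀ (sub_ne_zero.mpr hne12), one_smul] at this
  have hq' : (q : E) ∈ p i := by
    have := (p i).sub_mem hm1 ((p i).smul_mem t₁ hxq)
    simpa [hc] using this
  have hx : x ∈ p i := by
    have := (p i).add_mem hxq hq'
    rwa [sub_add_cancel] at this
  exact hxF (Set.mem_iUnion.mpr ⟨i, hx⟩)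
end

section
/- Let D be a bounded distributive lattice and let D ∗ J₂ denote the sublattice of D³ of all triples (x, y, z) with z ≤ x and z ≤ y. Let E be a bounded distributive lattice and a, b ∈ E with a ∧ b = 0. Then for every 0,1-lattice homomorphism f : D → E, there is a unique 0,1-lattice homomorphism g : D ∗ J₂ → E with g(1,0,0) = a, g(0,1,0) = b, and g(x,x,x) = f(x) for all x ∈ D; it is given by g(x,y,z) = (f(x) ∧ a) ∨ (f(y) ∧ b) ∨ f(z). -/
/-- free distributive product with J₂.  D ∗ J₂ is the sublattice
of D³ of triples (x, y, z) with z ≤ x and z ≤ y (componentwise order).  For a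
0,1-lattice homomorphism f : D → E and a, b ∈ E with a ⊓ b = 0, there is a
unique 0,1-lattice homomorphism g : D ∗ J₂ → E with g(1,0,0) = a,
g(0,1,0) = b and g(x,x,x) = f x; it is given by
g(x,y,z) = (f x ⊓ a) ⊔ (f y ⊓ b) ⊔ f z. -/
theorem stmt15 {D E : Type*} [DistribLattice D] [BoundedOrder D]
    [DistribLattice E] [BoundedOrder E]
    (f : D → E)
    (hfsup : ∀ x y : D, f (x ⊔ y) = f x ⊔ f y)
    (hfinf : ∀ x y : D, f (x ⊓ y) = f x ⊓ f y)
    (hfbot : f ⊥ = ⊥) (hftop : f ⊤ = ⊤)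
    (a b : E) (hab : a ⊓ b = ⊥) :
    let J2 := {t : D × D × D // t.2.2 ≤ t.1 ∧ t.2.2 ≤ t.2.1}
    let Cond : (J2 → E) → Prop := fun g =>
      g ⟨(⊤, ⊥, ⊥), ⟨bot_le, bot_le⟩⟩ = a ∧
      g ⟨(⊥, ⊤, ⊥), ⟨bot_le, bot_le⟩⟩ = b ∧
      (∀ x : D, g ⟨(x, x, x), ⟨le_rfl, le_rfl⟩⟩ = f x) ∧
      (∀ s t : J2,
        g ⟨(s.1.1 ⊔ t.1.1, s.1.2.1 ⊔ t.1.2.1, s.1.2.2 ⊔ t.1.2.2),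
            ⟨sup_le_sup s.2.1 t.2.1, sup_le_sup s.2.2 t.2.2⟩⟩ = g s ⊔ g t) ∧
      (∀ s t : J2,
        g ⟨(s.1.1 ⊓ t.1.1, s.1.2.1 ⊓ t.1.2.1, s.1.2.2 ⊓ t.1.2.2),
            ⟨inf_le_inf s.2.1 t.2.1, inf_le_inf s.2.2 t.2.2⟩⟩ = g s ⊓ g t)
    (∃! g : J2 → E, Cond g) ∧
      ∀ g : J2 → E, Cond g →
        ∀ t : J2, g t = (f t.1.1 ⊓ a) ⊔ (f t.1.2.1 ⊓ b) ⊔ f t.1.2.2 := by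
  intro J2 Cond
  have hmono : ∀ x y : D, x ≤ y → f x ≤ f y := by
    intro x y h
    have h1 := hfinf x y
    rw [inf_eq_left.mpr h] at h1
    exact inf_eq_left.mp h1.symm
  -- a generic lemma for bounding a meet of two three-fold joins
  have key : ∀ {T A1 B1 C1 A2 B2 C2 : E},
      A1 ⊓ A2 ≤ T → A1 ⊓ B2 ≤ T → A1 ⊓ C2 ≤ T →
      B1 ⊓ A2 ≤ T → B1 ⊓ B2 ≤ T → B1 ⊓ C2 ≤ T →
      C1 ⊓ A2 ≤ T → C1 ⊓ B2 ≤ T → C1 ⊓ C2 ≤ T →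
      (A1 ⊔ B1 ⊔ C1) ⊓ (A2 ⊔ B2 ⊔ C2) ≤ T := by
    intro T A1 B1 C1 A2 B2 C2 h11 h12 h13 h21 h22 h23 h31 h32 h33
    simp only [inf_sup_left, inf_sup_right, sup_le_iff]
    tauto
  -- the candidate map
  set g0 : J2 → E :=
    fun t => (f t.1.1 ⊓ a) ⊔ (f t.1.2.1 ⊓ b) ⊔ f t.1.2.2 with hg0
  -- the uniqueness/formula part
  have huniq : ∀ g : J2 → E, Cond g → ∀ t : J2, g t = g0 t := by
    intro g hg t
    obtain ⟨ha, hb, hd, hsup, hinf⟩ := hg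
    have geq : ∀ s t : J2, s.1 = t.1 → g s = g t :=
      fun s t h => congrArg g (Subtype.ext h)
    obtain ⟨⟨x, y, z⟩, hzx, hzy⟩ := t
    have s1 : J2 := ⟨(x, ⊥, ⊥), ⟨bot_le, bot_le⟩⟩
    have h1 : g ⟨(x, ⊥, ⊥), ⟨bot_le, bot_le⟩⟩ = f x ⊓ a := by
      have h := hinf ⟨(x, x, x), ⟨le_rfl, le_rfl⟩⟩ ⟨(⊤, ⊥, ⊥), ⟨bot_le, bot_le⟩⟩
      rw [hd, ha] at h
      exact (geq _ _ (by simp)).trans h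
    have h2 : g ⟨(⊥, y, ⊥), ⟨bot_le, bot_le⟩⟩ = f y ⊓ b := by
      have h := hinf ⟨(y, y, y), ⟨le_rfl, le_rfl⟩⟩ ⟨(⊥, ⊤, ⊥), ⟨bot_le, bot_le⟩⟩
      rw [hd, hb] at h
      exact (geq _ _ (by simp)).trans h
    have h3 : g ⟨(x, y, ⊥), ⟨bot_le, bot_le⟩⟩ =
        (f x ⊓ a) ⊔ (f y ⊓ b) := by
      have h := hsup ⟨(x, ⊥, ⊥), ⟨bot_le, bot_le⟩⟩ ⟨(⊥, y, ⊥), ⟨bot_le, bot_le⟩⟩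
      rw [h1, h2] at h
      exact (geq _ _ (by simp)).trans h
    have h4 : g ⟨(x, y, z), ⟨hzx, hzy⟩⟩ =
        ((f x ⊓ a) ⊔ (f y ⊓ b)) ⊔ f z := by
      have h := hsup ⟨(x, y, ⊥), ⟨bot_le, bot_le⟩⟩ ⟨(z, z, z), ⟨le_rfl, le_rfl⟩⟩
      rw [h3, hd] at h
      exact (geq _ _ (by simp [sup_of_le_left hzx, sup_of_le_left hzy])).trans h
    simpa [g0] using h4
  -- the candidate satisfies the conditions
  have hCond0 : Cond g0 := by
    refine ⟨?_, ?_, ?_, ?_, ?_⟩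
    · simp [g0, hftop, hfbot]
    · simp [g0, hftop, hfbot]
    · intro x
      simp only [g0]
      exact sup_of_le_right (sup_le inf_le_left inf_le_left)
    · intro s t
      simp only [g0, hfsup, inf_sup_right]
      ac_rfl
    · intro s t
      simp only [g0, hfinf]
      apply le_antisymm
      · refine le_inf (sup_le (sup_le ?_ ?_) ?_) (sup_le (sup_le ?_ ?_) ?_)
        · exact le_sup_left.trans' (le_sup_left.trans'
            (inf_le_inf_right a inf_le_left))
        · exact le_sup_left.trans' (le_sup_right.trans'
            (inf_le_inf_right b inf_le_left))
        · exact le_sup_right.trans' inf_le_left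
        · exact le_sup_left.trans' (le_sup_left.trans'
            (inf_le_inf_right a inf_le_right))
        · exact le_sup_left.trans' (le_sup_right.trans'
            (inf_le_inf_right b inf_le_right))
        · exact le_sup_right.trans' inf_le_right
      · apply key
        · exact le_sup_left.trans' (le_sup_left.trans'
            (le_inf (le_inf (inf_le_left.trans inf_le_left)
              (inf_le_right.trans inf_le_left)) (inf_le_left.trans inf_le_right)))
        · refine le_trans (le_inf (inf_le_left.trans inf_le_right)
            (inf_le_right.trans inf_le_right)) ?_
          rw [hab]; exact bot_le
        · exact le_sup_left.trans' (le_sup_left.trans'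
            (le_inf (le_inf (inf_le_left.trans inf_le_left)
              (inf_le_right.trans (hmono _ _ t.2.1)))
              (inf_le_left.trans inf_le_right)))
        · refine le_trans (le_inf (inf_le_right.trans inf_le_right)
            (inf_le_left.trans inf_le_right)) ?_
          rw [hab]; exact bot_le
        · exact le_sup_left.trans' (le_sup_right.trans'
            (le_inf (le_inf (inf_le_left.trans inf_le_left)
              (inf_le_right.trans inf_le_left)) (inf_le_left.trans inf_le_right)))
        · exact le_sup_left.trans' (le_sup_right.trans'
            (le_inf (le_inf (inf_le_left.trans inf_le_left)
              (inf_le_right.trans (hmono _ _ t.2.2)))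
              (inf_le_left.trans inf_le_right)))
        · exact le_sup_left.trans' (le_sup_left.trans'
            (le_inf (le_inf (inf_le_left.trans (hmono _ _ s.2.1))
              (inf_le_right.trans inf_le_left)) (inf_le_right.trans inf_le_right)))
        · exact le_sup_left.trans' (le_sup_right.trans'
            (le_inf (le_inf (inf_le_left.trans (hmono _ _ s.2.2))
              (inf_le_right.trans inf_le_left)) (inf_le_right.trans inf_le_right)))
        · exact le_sup_right
  constructor
  · exact ⟨g0, hCond0, fun g hg => funext fun t => huniq g hg t⟩
  · intro g hg t
    exact huniq g hg t
end

section
/- Let D be a distributive lattice with zero that is not a generalized dual Heyting algebra. Then the lattice Dᵒᵐᵉᵍᵃ (the countably infinite power of D with componentwise operations) does not have countably based differences; in particular, there exist elements a, b ∈ D such that for every descending sequence (eₙ) in Dᵒᵐᵉᵍᵃ cofinal in the filter { x : ε(a) ≤ ε(b) ∨ x } (where ε is the diagonal embedding), a contradiction arises; hence Dᵒᵐᵉᵍᵃ is not isomorphic to Idc G for any abelian ℓ-group G. -/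
/-- if a distributive lattice D with zero is not a generalized
dual Heyting algebra, then D^ω (the countable power with componentwise
operations) does not have countably based differences: there are a, b ∈ D
such that the filter { x : ε a ≤ ε b ⊔ x } (ε the diagonal embedding) has no
countable cofinal (generating) family; consequently D^ω is not isomorphic
(as a poset, equivalently as a lattice) to Idc G for any abelian ℓ-group G,
where ⟨x⟩ ⊆ ⟨y⟩ in Idc G is rendered by ∃ n, |x| ≤ n • |y|. -/
theorem stmt16 {D : Type*} [DistribLattice D] [OrderBot D]
    (hnot : ¬ ∀ a b : D, ∃ m : D, a ≤ b ⊔ m ∧ ∀ x : D, a ≤ b ⊔ x → m ≤ x) :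
    (∃ a b : D, ¬ ∃ c : ℕ → (ℕ → D),
      (∀ n : ℕ, (fun _ => a : ℕ → D) ≤ (fun _ => b : ℕ → D) ⊔ c n) ∧
      (∀ x : ℕ → D, (fun _ => a : ℕ → D) ≤ (fun _ => b : ℕ → D) ⊔ x →
        ∃ n : ℕ, c n ≤ x)) ∧
    (∀ (G : Type) [Lattice G] [AddCommGroup G]
        [CovariantClass G G (· + ·) (· ≤ ·)],
      ∀ e : G → (ℕ → D),
        ¬ (Function.Surjective e ∧
           ∀ x y : G, (∃ n : ℕ, |x| ≤ n • |y|) ↔ e x ≤ e y)) := by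
  push_neg at hnot
  obtain ⟨a, b, hab⟩ := hnot
  -- hab : ∀ m, a ≤ b ⊔ m → ∃ x, a ≤ b ⊔ x ∧ ¬ m ≤ x
  have noC : ¬ ∃ c : ℕ → (ℕ → D),
      (∀ n : ℕ, (fun _ => a : ℕ → D) ≤ (fun _ => b : ℕ → D) ⊔ c n) ∧
      (∀ x : ℕ → D, (fun _ => a : ℕ → D) ≤ (fun _ => b : ℕ → D) ⊔ x →
        ∃ n : ℕ, c n ≤ x) := by
    rintro ⟨c, h1, h2⟩
    have hmem : ∀ n, a ≤ b ⊔ c n n := fun n => h1 n n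
    choose X hX1 hX2 using fun n => hab (c n n) (hmem n)
    obtain ⟨n, hn⟩ := h2 (fun k => X k) (fun k => hX1 k)
    exact hX2 n (hn n)
  refine ⟨⟨a, b, noC⟩, ?_⟩
  intro G _ _ _ e ⟨hsurj, hiff⟩
  have habs : ∀ x : G, e x = e |x| := by
    intro x
    apply le_antisymm
    · exact (hiff x |x|).mp ⟨1, by rw [abs_abs, one_smul]⟩
    · exact (hiff |x| x).mp ⟨1, by rw [abs_abs, one_smul]⟩
  have ejoin : ∀ x y : G, e x ⊔ e y = e (|x| ⊔ |y|) := by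
    intro x y
    have hs : (0:G) ≤ |x| ⊔ |y| := le_trans (abs_nonneg x) le_sup_left
    have habs_s : |(|x| ⊔ |y|)| = |x| ⊔ |y| := abs_of_nonneg hs
    apply le_antisymm
    · apply sup_le
      · exact (hiff x _).mp ⟨1, by rw [habs_s, one_smul]; exact le_sup_left⟩
      · exact (hiff y _).mp ⟨1, by rw [habs_s, one_smul]; exact le_sup_right⟩
    · obtain ⟨z, hz⟩ := hsurj (e x ⊔ e y)
      obtain ⟨n₁, hn₁⟩ := (hiff x z).mpr (hz ▸ le_sup_left)
      obtain ⟨n₂, hn₂⟩ := (hiff y z).mpr (hz ▸ le_sup_right)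
      have hzn : (0:G) ≤ |z| := abs_nonneg z
      have : |x| ⊔ |y| ≤ (max n₁ n₂) • |z| := by
        apply sup_le
        · exact hn₁.trans (nsmul_le_nsmul_left hzn (le_max_left _ _))
        · exact hn₂.trans (nsmul_le_nsmul_left hzn (le_max_right _ _))
      have := (hiff _ z).mp ⟨max n₁ n₂, by rw [habs_s]; exact this⟩
      exact hz ▸ this
  obtain ⟨g, hg⟩ := hsurj (fun _ => a)
  obtain ⟨h, hh⟩ := hsurj (fun _ => b)
  apply noC
  refine ⟨fun n => e ((|g| - n • |h|)⁺), ?_, ?_⟩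
  · intro n
    rw [← hg, ← hh, ejoin]
    set p : G := (|g| - n • |h|)⁺ with hp
    have hpn : (0:G) ≤ p := posPart_nonneg _
    have habsp : |p| = p := abs_of_nonneg hpn
    rw [habsp]
    apply (hiff g _).mp
    refine ⟨n + 1, ?_⟩
    have h1 : |g| ≤ n • |h| + p := by
      rw [hp]
      calc |g| = n • |h| + (|g| - n • |h|) := by abel
        _ ≤ n • |h| + (|g| - n • |h|)⁺ := by
            exact add_le_add le_rfl (le_posPart _)
    have h2 : n • |h| + p ≤ (n + 1) • (|h| ⊔ p) := by
      rw [succ_nsmul]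
      exact add_le_add (nsmul_le_nsmul_right le_sup_left n) le_sup_right
    have habs_s : |(|h| ⊔ p)| = |h| ⊔ p :=
      abs_of_nonneg (le_trans hpn le_sup_right)
    rw [habs_s]
    exact h1.trans h2
  · intro x hx
    obtain ⟨z, hz⟩ := hsurj x
    rw [← hg, ← hh, ← hz, ejoin] at hx
    obtain ⟨n, hn⟩ := (hiff g _).mpr hx
    have habs_s : |(|h| ⊔ |z|)| = |h| ⊔ |z| :=
      abs_of_nonneg (le_trans (abs_nonneg h) le_sup_left)
    rw [habs_s] at hn
    refine ⟨n, ?_⟩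
    rw [← hz]
    apply (hiff _ z).mp
    refine ⟨n, ?_⟩
    have hpn : (0:G) ≤ (|g| - n • |h|)⁺ := posPart_nonneg _
    rw [abs_of_nonneg hpn]
    have hsum : |h| ⊔ |z| ≤ |h| + |z| :=
      sup_le (le_add_of_nonneg_right (abs_nonneg z))
        (le_add_of_nonneg_left (abs_nonneg h))
    have : |g| ≤ n • |h| + n • |z| := by
      calc |g| ≤ n • (|h| ⊔ |z|) := hn
        _ ≤ n • (|h| + |z|) := nsmul_le_nsmul_right hsum n
        _ = n • |h| + n • |z| := smul_add n _ _
    have hsub : |g| - n • |h| ≤ n • |z| := by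
      rwa [sub_le_iff_le_add, add_comm]
    rw [posPart_def]
    exact sup_le hsub (nsmul_nonneg (abs_nonneg z) n)
end

section
/- For every abelian lattice-ordered group G and all a, b ∈ G⁺, the filter { x ∈ G⁺ : ⟨a⟩ ⊆ ⟨b⟩ ∨ ⟨x⟩ } of principal ℓ-ideals is countably generated; that is, the lattice Idc G of principal ℓ-ideals of G has countably based differences. -/
/-- for an abelian ℓ-group G and a, b ∈ G⁺, the filter
{ ⟨x⟩ : ⟨a⟩ ⊆ ⟨b⟩ ∨ ⟨x⟩ } of Idc G is countably generated: there is a sequence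
(c n) of positive elements, each with ⟨a⟩ ⊆ ⟨b⟩ ∨ ⟨c n⟩ (i.e. a ≤ m•(b + c n)
for some m), which is downward cofinal: whenever x ≥ 0 and ⟨a⟩ ⊆ ⟨b⟩ ∨ ⟨x⟩,
some ⟨c n⟩ ⊆ ⟨x⟩. -/
theorem stmt17 {G : Type*} [Lattice G] [AddCommGroup G]
    [CovariantClass G G (· + ·) (· ≤ ·)]
    (a b : G) (ha : 0 ≤ a) (hb : 0 ≤ b) :
    ∃ c : ℕ → G,
      (∀ n : ℕ, 0 ≤ c n) ∧
      (∀ n : ℕ, ∃ m : ℕ, a ≤ m • (b + c n)) ∧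
      (∀ x : G, 0 ≤ x → (∃ m : ℕ, a ≤ m • (b + x)) →
        ∃ n : ℕ, ∃ m : ℕ, c n ≤ m • x) := by
  refine ⟨fun n => (a - n • b) ⊔ 0, fun n => le_sup_right, ?_, ?_⟩
  · intro n
    refine ⟨n + 1, ?_⟩
    have hc : (0:G) ≤ (a - n • b) ⊔ 0 := le_sup_right
    have h1 : a ≤ n • b + ((a - n • b) ⊔ 0) := by
      have := add_le_add_left (le_sup_left : a - n • b ≤ (a - n • b) ⊔ 0) (n • b)
      rw [add_comm]; simpa using this
    calc a ≤ n • b + ((a - n • b) ⊔ 0) := h1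
      _ ≤ (n+1) • b + (n+1) • ((a - n • b) ⊔ 0) := by
          apply add_le_add
          · exact nsmul_le_nsmul_left hb (Nat.le_succ n)
          · calc (a - n • b) ⊔ 0 = 1 • ((a - n • b) ⊔ 0) := (one_nsmul _).symm
              _ ≤ (n+1) • ((a - n • b) ⊔ 0) := nsmul_le_nsmul_left hc (Nat.succ_le_succ (Nat.zero_le n))
      _ = (n+1) • (b + ((a - n • b) ⊔ 0)) := (nsmul_add _ _ _).symm
  · rintro x hx ⟨m, hm⟩
    refine ⟨m, m, ?_⟩
    have h1 : a - m • b ≤ m • x := by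
      have h : a ≤ m • b + m • x := by rwa [nsmul_add] at hm
      exact sub_le_iff_le_add.mpr (by rwa [add_comm] at h)
    exact sup_le h1 (nsmul_nonneg hx m)
end

section
/- Let n be a nonnegative integer and let b₁, …, bₙ, c be linear functionals on a real vector space E. Then ⋂ᵢ { x : bᵢ(x) ≥ 0 } ⊆ { x : c(x) ≥ 0 } if and only if c lies in the convex cone generated by {b₁, …, bₙ}, i.e., c = Σᵢ λᵢ bᵢ for some λᵢ ≥ 0. -/
theorem farkas_aux {E : Type*} [AddCommGroup E] [Module ℝ E] :
    ∀ (n : ℕ) (b : Fin n → E →ₗ[ℝ] ℝ) (c : E →ₗ[ℝ] ℝ),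
    (∀ x : E, (∀ i : Fin n, 0 ≤ b i x) → 0 ≤ c x) →
    ∃ lam : Fin n → ℝ, (∀ i, 0 ≤ lam i) ∧ c = ∑ i, lam i • b i := by
  intro n
  induction n with
  | zero =>
    intro b c h
    refine ⟨fun _ => 0, fun i => le_rfl, ?_⟩
    have hzero : ∀ x, c x = 0 := by
      intro x
      have h1 := h x (fun i => i.elim0)
      have h2 := h (-x) (fun i => i.elim0)
      simp only [map_neg] at h2
      linarith
    ext x
    simp [hzero]
  | succ n ih =>
    intro b c h
    by_cases h1 : ∀ x : E, (∀ i : Fin n, 0 ≤ b i.castSucc x) → 0 ≤ c x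
    · obtain ⟨lam, hlam, hc⟩ := ih (fun i => b i.castSucc) c h1
      refine ⟨Fin.snoc lam 0, ?_, ?_⟩
      · intro i
        refine Fin.lastCases ?_ ?_ i
        · simp
        · intro j; simpa using hlam j
      · rw [Fin.sum_univ_castSucc]
        simp [hc]
    · push_neg at h1
      obtain ⟨y, hby, hcy⟩ := h1
      set β := b (Fin.last n) with hβ
      have hβy : β y < 0 := by
        by_contra hb
        push_neg at hb
        have := h y (fun i => Fin.lastCases hb hby i)
        linarith
      have hβy0 : β y ≠ 0 := ne_of_lt hβy
      set b' : Fin n → E →ₗ[ℝ] ℝ :=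
        fun i => b i.castSucc - (b i.castSucc y / β y) • β with hb'
      set c' : E →ₗ[ℝ] ℝ := c - (c y / β y) • β with hc'def
      have hhat : ∀ (f : E →ₗ[ℝ] ℝ) (x : E),
          f (x - (β x / β y) • y) = f x - (f y / β y) * β x := by
        intro f x
        rw [map_sub, map_smul, smul_eq_mul]
        ring
      have key : ∀ x : E, (∀ i : Fin n, 0 ≤ b' i x) → 0 ≤ c' x := by
        intro x hx
        have h0 : 0 ≤ c (x - (β x / β y) • y) := by
          apply h
          intro i
          refine Fin.lastCases ?_ ?_ i
          · rw [← hβ, hhat β x, div_self hβy0, one_mul, sub_self]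
          · intro j
            have := hx j
            rw [hhat (b j.castSucc) x]
            simpa [hb'] using this
        rw [hhat c x] at h0
        simpa [hc'def] using h0
      obtain ⟨μ, hμ, hμc⟩ := ih b' c' key
      have hS : 0 ≤ ∑ i, μ i * b i.castSucc y :=
        Finset.sum_nonneg fun i _ => mul_nonneg (hμ i) (hby i)
      set t : ℝ := (c y - ∑ i, μ i * b i.castSucc y) / β y with ht
      have htpos : 0 ≤ t := by
        apply le_of_lt
        apply div_pos_of_neg_of_neg _ hβy
        linarith
      refine ⟨Fin.snoc μ t, ?_, ?_⟩
      · intro i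
        refine Fin.lastCases ?_ ?_ i
        · simpa using htpos
        · intro j; simpa using hμ j
      · ext x
        have hx' := LinearMap.congr_fun hμc x
        simp only [hc'def, hb', LinearMap.sub_apply, LinearMap.smul_apply,
          smul_eq_mul, LinearMap.coe_sum, Finset.sum_apply] at hx'
        rw [LinearMap.coe_sum, Finset.sum_apply, Fin.sum_univ_castSucc]
        simp only [LinearMap.smul_apply, smul_eq_mul, Fin.snoc_castSucc, Fin.snoc_last]
        have expand : ∑ i : Fin n, μ i * (b i.castSucc x - b i.castSucc y / β y * β x)
            = (∑ i : Fin n, μ i * b i.castSucc x)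
              - (∑ i : Fin n, μ i * b i.castSucc y) * (β x / β y) := by
          simp_rw [mul_sub]
          rw [Finset.sum_sub_distrib, Finset.sum_mul]
          congr 1
          apply Finset.sum_congr rfl
          intro i _
          ring
        rw [expand] at hx'
        have haux : t * β x = c y / β y * β x
            - (∑ i : Fin n, μ i * b i.castSucc y) * (β x / β y) := by
          rw [ht]
          field_simp
        linarith

/-- Farkas lemma for linear functionals on an arbitrary real
vector space: ⋂ i { bᵢ ≥ 0 } ⊆ { c ≥ 0 } iff c is a nonnegative combination
of the bᵢ. -/
theorem stmt19 {E : Type*} [AddCommGroup E] [Module ℝ E]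
    (n : ℕ) (b : Fin n → E →ₗ[ℝ] ℝ) (c : E →ₗ[ℝ] ℝ) :
    (∀ x : E, (∀ i : Fin n, 0 ≤ b i x) → 0 ≤ c x) ↔
      ∃ lam : Fin n → ℝ, (∀ i, 0 ≤ lam i) ∧ c = ∑ i, lam i • b i := by
  constructor
  · exact farkas_aux n b c
  · rintro ⟨lam, hlam, rfl⟩ x hx
    rw [LinearMap.coe_sum, Finset.sum_apply]
    exact Finset.sum_nonneg fun i _ => by
      simpa using mul_nonneg (hlam i) (hx i)
end
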